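/- Let p be a prime, r ≥ 1, and d₁,...,d_r, d'₁,...,d'_{r'} positive integers coprime to p, with j₁,...,j_r and j'₁,...,j'_{r'} nonnegative integers. If the polynomials ∏_{i=1}^{r} (1 - x^{dᵢ p^{jᵢ}})/(1 - x^{dᵢ}) and ∏_{i=1}^{r'} (1 - x^{d'ᵢ p^{j'ᵢ}})/(1 - x^{d'ᵢ}) in ℤ[x] are equal, and some degree d occurs among the dᵢ with jᵢ > 0, then d must occur among the d'ᵢ with j'ᵢ > 0 as well. -/

import Mathlib

open Polynomial

-- geometric sum identity over ℂ
private lemma geom_aux (d n : ℕ) :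
    (∑ k ∈ Finset.range n, (X : Polynomial ℂ) ^ (k * d)) * ((X : Polynomial ℂ) ^ d - 1)
      = (X : Polynomial ℂ) ^ (d * n) - 1 := by
  have h : ∀ k, (X : Polynomial ℂ) ^ (k * d) = ((X : Polynomial ℂ) ^ d) ^ k := fun k => by
    rw [← pow_mul, mul_comm]
  simp_rw [h]
  rw [geom_sum_mul, ← pow_mul]

private lemma rm_geom (d n : ℕ) (hd : 0 < d) (hn : 0 < n) (ζ : ℂ) (hζ : ζ ^ d ≠ 1) :
    rootMultiplicity ζ (∑ k ∈ Finset.range n, (X : Polynomial ℂ) ^ (k * d))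
      = if ζ ^ (d * n) = 1 then 1 else 0 := by
  have hkey := geom_aux d n
  have hne : (X : Polynomial ℂ) ^ (d * n) - 1 ≠ 0 := by
    simpa using X_pow_sub_C_ne_zero (Nat.mul_pos hd hn) (1 : ℂ)
  have hmulne : (∑ k ∈ Finset.range n, (X : Polynomial ℂ) ^ (k * d)) *
      ((X : Polynomial ℂ) ^ d - 1) ≠ 0 := by rw [hkey]; exact hne
  have h2 := rootMultiplicity_mul (x := ζ) hmulne
  have h3 : rootMultiplicity ζ ((X : Polynomial ℂ) ^ d - 1) = 0 := by
    apply rootMultiplicity_eq_zero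
    simp only [IsRoot, eval_sub, eval_pow, eval_X, eval_one, sub_eq_zero]
    exact hζ
  have h4 : rootMultiplicity ζ (∑ k ∈ Finset.range n, (X : Polynomial ℂ) ^ (k * d))
      = rootMultiplicity ζ ((X : Polynomial ℂ) ^ (d * n) - 1) := by
    rw [← hkey, h2, h3, add_zero]
  rw [h4]
  by_cases hroot : ζ ^ (d * n) = 1
  · rw [if_pos hroot]
    have hsep : ((X : Polynomial ℂ) ^ (d * n) - C 1).Separable :=
      separable_X_pow_sub_C (1 : ℂ) (Nat.cast_ne_zero.mpr (Nat.mul_pos hd hn).ne') one_ne_zero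
    have hle : rootMultiplicity ζ ((X : Polynomial ℂ) ^ (d * n) - 1) ≤ 1 := by
      have := rootMultiplicity_le_one_of_separable (by simpa using hsep) ζ
      exact this
    have hpos : 0 < rootMultiplicity ζ ((X : Polynomial ℂ) ^ (d * n) - 1) := by
      rw [rootMultiplicity_pos hne]
      simp [IsRoot, sub_eq_zero, hroot]
    omega
  · rw [if_neg hroot]
    apply rootMultiplicity_eq_zero
    simp only [IsRoot, eval_sub, eval_pow, eval_X, eval_one, sub_eq_zero]
    exact hroot

private lemma rm_finset_prod {ι : Type*} (s : Finset ι) (f : ι → Polynomial ℂ)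
    (hf : ∀ i ∈ s, f i ≠ 0) (x : ℂ) :
    rootMultiplicity x (∏ i ∈ s, f i) = ∑ i ∈ s, rootMultiplicity x (f i) := by
  classical
  induction s using Finset.induction with
  | empty => simp [rootMultiplicity_eq_zero]
  | @insert a s' ha ih =>
    rw [Finset.prod_insert ha, Finset.sum_insert ha,
      rootMultiplicity_mul, ih (fun i hi => hf i (Finset.mem_insert_of_mem hi))]
    exact mul_ne_zero (hf a (Finset.mem_insert_self a s'))
      (Finset.prod_ne_zero_iff.mpr fun i hi => hf i (Finset.mem_insert_of_mem hi))

private lemma nat_dvd_aux {p e a k : ℕ} (hp : p.Prime) (he : ¬ p ∣ e) (ha : ¬ p ∣ a) :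
    e * p ∣ a * p ^ k ↔ e ∣ a ∧ 0 < k := by
  have hcop : Nat.Coprime e p := Nat.Coprime.symm ((Nat.Prime.coprime_iff_not_dvd hp).mpr he)
  constructor
  · intro h
    have hpd : p ∣ a * p ^ k := dvd_trans (dvd_mul_left p e) h
    have hk : 0 < k := by
      rcases Nat.eq_zero_or_pos k with hk0 | hk0
      · subst hk0; simp at hpd
        exact absurd hpd ha
      · exact hk0
    refine ⟨?_, hk⟩
    have hed : e ∣ a * p ^ k := dvd_trans (dvd_mul_right e p) h
    exact (Nat.Coprime.dvd_of_dvd_mul_right (Nat.Coprime.pow_right k hcop) hed)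
  · rintro ⟨hea, hk⟩
    have : a * p ^ k = (a * p ^ (k - 1)) * p := by
      rw [mul_assoc, ← pow_succ, Nat.sub_add_cancel hk]
    rw [this]
    exact mul_dvd_mul (dvd_trans hea (dvd_mul_right a _)) dvd_rfl

/-- If two products `∏ᵢ (1 - x^{dᵢ pʲⁱ})/(1 - x^{dᵢ})` (written as products of
geometric sums) with the `dᵢ`, `d'ᵢ` positive and coprime to the prime `p` are
equal in `ℤ[x]`, then any degree `dᵢ` occurring with `jᵢ > 0` also occurs among
the `d'ᵢ` with `j'ᵢ > 0`. -/
theorem deg_occurs_of_prod_geom_eq (p : ℕ) (hp : p.Prime) (r r' : ℕ)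
    (d : Fin r → ℕ) (j : Fin r → ℕ) (d' : Fin r' → ℕ) (j' : Fin r' → ℕ)
    (hd : ∀ i, 0 < d i) (hd' : ∀ i, 0 < d' i)
    (hcop : ∀ i, ¬ p ∣ d i) (hcop' : ∀ i, ¬ p ∣ d' i)
    (heq : (∏ i, ∑ k ∈ Finset.range (p ^ j i), (X : Polynomial ℤ) ^ (k * d i)) =
           (∏ i, ∑ k ∈ Finset.range (p ^ j' i), (X : Polynomial ℤ) ^ (k * d' i)))
    (i : Fin r) (hji : 0 < j i) :
    ∃ i' : Fin r', d' i' = d i ∧ 0 < j' i' := by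
  classical
  have hppos : 0 < p := hp.pos
  -- map the equation to ℂ
  have heqC : (∏ i, ∑ k ∈ Finset.range (p ^ j i), (X : Polynomial ℂ) ^ (k * d i)) =
      (∏ i, ∑ k ∈ Finset.range (p ^ j' i), (X : Polynomial ℂ) ^ (k * d' i)) := by
    have := congrArg (Polynomial.map (Int.castRingHom ℂ)) heq
    simpa only [Polynomial.map_prod, Polynomial.map_sum, Polynomial.map_pow,
      Polynomial.map_X] using this
  -- counting identity for every admissible e
  have hcount : ∀ e : ℕ, 0 < e → ¬ p ∣ e →
      (Finset.univ.filter (fun i => e ∣ d i ∧ 0 < j i)).card =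
      (Finset.univ.filter (fun i' => e ∣ d' i' ∧ 0 < j' i')).card := by
    intro e he hpe
    have hep : (e * p : ℕ) ≠ 0 := by positivity
    set ζ : ℂ := Complex.exp (2 * Real.pi * Complex.I / (e * p)) with hζdef
    have hprim : IsPrimitiveRoot ζ (e * p) := by
      have := Complex.isPrimitiveRoot_exp (e * p) hep
      simpa using this
    have hpow1 : ∀ l : ℕ, ζ ^ l = 1 ↔ e * p ∣ l := fun l => hprim.pow_eq_one_iff_dvd l
    have hside : ∀ (m : ℕ) (dd jj : Fin m → ℕ) (hdd : ∀ i, 0 < dd i)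
        (hcc : ∀ i, ¬ p ∣ dd i),
        rootMultiplicity ζ (∏ i, ∑ k ∈ Finset.range (p ^ jj i), (X : Polynomial ℂ) ^ (k * dd i))
          = (Finset.univ.filter (fun i => e ∣ dd i ∧ 0 < jj i)).card := by
      intro m dd jj hdd hcc
      have hne : ∀ i : Fin m,
          (∑ k ∈ Finset.range (p ^ jj i), (X : Polynomial ℂ) ^ (k * dd i)) ≠ 0 := by
        intro i
        have := geom_aux (dd i) (p ^ jj i)
        have hne2 : (X : Polynomial ℂ) ^ (dd i * p ^ jj i) - 1 ≠ 0 := by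
          simpa using X_pow_sub_C_ne_zero (Nat.mul_pos (hdd i) (pow_pos hppos _)) (1 : ℂ)
        intro h0
        rw [h0, zero_mul] at this
        exact hne2 this.symm
      rw [rm_finset_prod _ _ (fun i _ => hne i)]
      rw [Finset.card_filter]
      apply Finset.sum_congr rfl
      intro i2 _
      have hζd : ζ ^ dd i2 ≠ 1 := by
        intro h1
        exact hcc i2 (dvd_trans (dvd_mul_left p e) ((hpow1 _).mp h1))
      rw [rm_geom (dd i2) (p ^ jj i2) (hdd i2) (pow_pos hppos _) ζ hζd]
      have hiff : ζ ^ (dd i2 * p ^ jj i2) = 1 ↔ (e ∣ dd i2 ∧ 0 < jj i2) := by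
        rw [hpow1, nat_dvd_aux hp hpe (hcc i2)]
      simp only [hiff]
    have h1 := hside r d j hd hcop
    have h2 := hside r' d' j' hd' hcop'
    rw [← h1, ← h2, heqC]
  -- combinatorial inversion
  set S : Finset ℕ := (Finset.image d Finset.univ) ∪ (Finset.image d' Finset.univ) with hS
  have hSmem : ∀ m ∈ S, 0 < m ∧ ¬ p ∣ m := by
    intro m hm
    rw [hS, Finset.mem_union, Finset.mem_image, Finset.mem_image] at hm
    rcases hm with ⟨i0, _, rfl⟩ | ⟨i0, _, rfl⟩
    · exact ⟨hd i0, hcop i0⟩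
    · exact ⟨hd' i0, hcop' i0⟩
  set f : ℕ → ℕ := fun m => (Finset.univ.filter (fun i => d i = m ∧ 0 < j i)).card with hf
  set g : ℕ → ℕ := fun m => (Finset.univ.filter (fun i' => d' i' = m ∧ 0 < j' i')).card with hg
  -- fiberwise decomposition
  have hfib : ∀ e : ℕ, (Finset.univ.filter (fun i => e ∣ d i ∧ 0 < j i)).card =
      ∑ m ∈ S.filter (e ∣ ·), f m := by
    intro e
    rw [Finset.card_eq_sum_card_fiberwise
      (f := d) (t := S.filter (e ∣ ·)) ?_]
    · apply Finset.sum_congr rfl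
      intro m hm
      rw [Finset.mem_filter] at hm
      rw [hf]
      congr 1
      ext i2
      simp only [Finset.mem_filter, Finset.mem_univ, true_and]
      constructor
      · rintro ⟨⟨_, hj2⟩, hdm⟩; exact ⟨hdm, hj2⟩
      · rintro ⟨hdm, hj2⟩; exact ⟨⟨hdm ▸ hm.2, hj2⟩, hdm⟩
    · intro i2 hi2
      rw [Finset.mem_coe, Finset.mem_filter] at hi2
      rw [Finset.mem_coe, Finset.mem_filter]
      exact ⟨Finset.mem_union_left _ (Finset.mem_image_of_mem d (Finset.mem_univ _)), hi2.2.1⟩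
  have hfib' : ∀ e : ℕ, (Finset.univ.filter (fun i' => e ∣ d' i' ∧ 0 < j' i')).card =
      ∑ m ∈ S.filter (e ∣ ·), g m := by
    intro e
    rw [Finset.card_eq_sum_card_fiberwise
      (f := d') (t := S.filter (e ∣ ·)) ?_]
    · apply Finset.sum_congr rfl
      intro m hm
      rw [Finset.mem_filter] at hm
      rw [hg]
      congr 1
      ext i2
      simp only [Finset.mem_filter, Finset.mem_univ, true_and]
      constructor
      · rintro ⟨⟨_, hj2⟩, hdm⟩; exact ⟨hdm, hj2⟩
      · rintro ⟨hdm, hj2⟩; exact ⟨⟨hdm ▸ hm.2, hj2⟩, hdm⟩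
    · intro i2 hi2
      rw [Finset.mem_coe, Finset.mem_filter] at hi2
      rw [Finset.mem_coe, Finset.mem_filter]
      exact ⟨Finset.mem_union_right _ (Finset.mem_image_of_mem d' (Finset.mem_univ _)), hi2.2.1⟩
  have hsum : ∀ m ∈ S, ∑ m' ∈ S.filter (m ∣ ·), f m' = ∑ m' ∈ S.filter (m ∣ ·), g m' := by
    intro m hm
    obtain ⟨hmpos, hmp⟩ := hSmem m hm
    rw [← hfib, ← hfib', hcount m hmpos hmp]
  -- downward strong induction
  have key : ∀ n : ℕ, ∀ m ∈ S, (S.filter (fun x => m < x)).card < n → f m = g m := by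
    intro n
    induction n with
    | zero => intro m _ h; omega
    | succ n ih =>
      intro m hm hcard
      have hmT : m ∈ S.filter (m ∣ ·) := Finset.mem_filter.mpr ⟨hm, dvd_rfl⟩
      have hrest : ∀ m' ∈ (S.filter (m ∣ ·)).erase m, f m' = g m' := by
        intro m' hm'
        rw [Finset.mem_erase, Finset.mem_filter] at hm'
        obtain ⟨hne, hm'S, hdvd⟩ := hm'
        have hm'pos := (hSmem m' hm'S).1
        have hlt : m < m' := lt_of_le_of_ne (Nat.le_of_dvd hm'pos hdvd) hne.symm
        apply ih m' hm'S
        have hsub : S.filter (fun x => m' < x) ⊂ S.filter (fun x => m < x) := by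
          constructor
          · intro x hx
            rw [Finset.mem_filter] at hx ⊢
            exact ⟨hx.1, lt_trans hlt hx.2⟩
          · intro habs
            have : m' ∈ S.filter (fun x => m < x) := Finset.mem_filter.mpr ⟨hm'S, hlt⟩
            have := habs this
            rw [Finset.mem_filter] at this
            omega
        have := Finset.card_lt_card hsub
        omega
      have e1 := Finset.add_sum_erase _ f hmT
      have e2 := Finset.add_sum_erase _ g hmT
      have e3 : ∑ m' ∈ (S.filter (m ∣ ·)).erase m, f m'
          = ∑ m' ∈ (S.filter (m ∣ ·)).erase m, g m' := Finset.sum_congr rfl hrest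
      have e4 := hsum m hm
      omega
  have hdS : d i ∈ S := Finset.mem_union_left _ (Finset.mem_image_of_mem d (Finset.mem_univ i))
  have hfpos : 0 < f (d i) := by
    rw [hf]
    apply Finset.card_pos.mpr
    exact ⟨i, Finset.mem_filter.mpr ⟨Finset.mem_univ i, rfl, hji⟩⟩
  have hgpos : 0 < g (d i) := by
    rw [← key ((S.filter (fun x => d i < x)).card + 1) (d i) hdS (by omega)]
    exact hfpos
  rw [hg] at hgpos
  obtain ⟨i', hi'⟩ := Finset.card_pos.mp hgpos
  rw [Finset.mem_filter] at hi'
  exact ⟨i', hi'.2⟩
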